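/- Suppose H : ℝ^N → ℝ is continuously differentiable, L ∈ ℝ^{N×N} is skew-symmetric, and the sequence (x^k) satisfies the average vector field scheme (x^{k+1} - x^k)/Δt = L·∫₀¹ ∇H(t·x^{k+1} + (1-t)·x^k) dt with Δt > 0. Then H(x^{k+1}) = H(x^k) for all k, i.e. the Hamiltonian is exactly conserved by the discrete scheme. -/

import Mathlib

open Matrix intervalIntegral

lemma skew_dot_zero {N : ℕ} (L : Matrix (Fin N) (Fin N) ℝ) (hL : Lᵀ = -L) (v : Fin N → ℝ) :
    v ⬝ᵥ (L *ᵥ v) = 0 := by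
  have h1 : v ⬝ᵥ (L *ᵥ v) = (v ᵥ* L) ⬝ᵥ v := Matrix.dotProduct_mulVec v L v
  have h2 : v ᵥ* L = Lᵀ *ᵥ v := (Matrix.mulVec_transpose L v).symm
  have h3 : v ⬝ᵥ (L *ᵥ v) = (-(L *ᵥ v)) ⬝ᵥ v := by rw [h1, h2, hL, Matrix.neg_mulVec]
  rw [neg_dotProduct, dotProduct_comm] at h3
  have hz : L *ᵥ v ⬝ᵥ v = 0 := by linarith
  rw [dotProduct_comm]; exact hz

/-- The average vector field (AVF) scheme exactly conserves the Hamiltonian. -/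
theorem avf_conservation {N : ℕ} (L : Matrix (Fin N) (Fin N) ℝ) (hL : Lᵀ = -L)
    (H : EuclideanSpace ℝ (Fin N) → ℝ) (hH : ContDiff ℝ 1 H)
    (Δt : ℝ) (hΔt : 0 < Δt) (x : ℕ → EuclideanSpace ℝ (Fin N))
    (hx : ∀ k, x (k + 1) - x k =
      Δt • (L.mulVec (∫ t in (0:ℝ)..1, (gradient H (t • x (k + 1) + (1 - t) • x k) : EuclideanSpace ℝ (Fin N))))) :
    ∀ k, H (x (k + 1)) = H (x k) := by
  intro k
  set v : EuclideanSpace ℝ (Fin N) := x (k+1) - x k with hv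
  set ℓ : ℝ → EuclideanSpace ℝ (Fin N) := fun t => t • x (k+1) + (1 - t) • x k with hℓ
  have hgradcont : Continuous (fun y => gradient H y) := by
    have hf := hH.continuous_fderiv one_ne_zero
    simp only [gradient]
    exact ((InnerProductSpace.toDual ℝ (EuclideanSpace ℝ (Fin N))).symm.continuous.comp hf)
  have hℓcont : Continuous ℓ := by fun_prop
  have hgl : Continuous (fun t => gradient H (ℓ t)) := hgradcont.comp hℓcont
  have hderiv : ∀ t : ℝ, HasDerivAt (fun t => H (ℓ t)) (inner ℝ (gradient H (ℓ t)) v : ℝ) t := by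
    intro t
    have hdl : HasDerivAt ℓ v t := by
      have : HasDerivAt (fun t : ℝ => t • x (k+1) + (1 - t) • x k) ((1:ℝ) • x (k+1) + (-1 : ℝ) • x k) t := by
        apply HasDerivAt.add
        · simpa using (hasDerivAt_id t).smul_const (x (k+1))
        · simpa using ((hasDerivAt_id t).const_sub 1).smul_const (x k)
      simpa [hv, hℓ, sub_eq_add_neg, neg_one_smul] using this
    have hg := ((hH.differentiable one_ne_zero) (ℓ t)).hasGradientAt
    have := hg.hasFDerivAt.comp_hasDerivAt t hdl
    simp at this ⊢
    exact this
  have hint : IntervalIntegrable (fun t => (inner ℝ (gradient H (ℓ t)) v : ℝ)) MeasureTheory.volume 0 1 :=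
    (hgl.inner continuous_const).intervalIntegrable 0 1
  have key : H (x (k+1)) - H (x k) = ∫ t in (0:ℝ)..1, (inner ℝ (gradient H (ℓ t)) v : ℝ) := by
    have := intervalIntegral.integral_eq_sub_of_hasDerivAt (f := fun t => H (ℓ t))
      (fun t _ => hderiv t) hint
    rw [this]
    norm_num [hℓ]
  -- move inner out of the integral
  set g : EuclideanSpace ℝ (Fin N) :=
    ∫ t in (0:ℝ)..1, (gradient H (ℓ t) : EuclideanSpace ℝ (Fin N)) with hg
  have hswap : (∫ t in (0:ℝ)..1, (inner ℝ (gradient H (ℓ t)) v : ℝ)) = inner ℝ g v := by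
    have hcomm : ∀ t : ℝ, (inner ℝ (gradient H (ℓ t)) v : ℝ) = (innerSL ℝ v) (gradient H (ℓ t)) := by
      intro t; simp [mul_comm]
    simp_rw [hcomm]
    rw [ContinuousLinearMap.intervalIntegral_comp_comm _ (hgl.intervalIntegrable 0 1)]
    simp [hg, mul_comm, real_inner_comm]
  have hvg : v = Δt • (L *ᵥ (g : Fin N → ℝ)) := by
    have hI := ((EuclideanSpace.equiv (Fin N) ℝ).toContinuousLinearMap).intervalIntegral_comp_comm
      (μ := MeasureTheory.volume) (hgl.intervalIntegrable 0 1)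
    have hpi : (∫ t in (0:ℝ)..1, (fun i => gradient H (ℓ t) i : Fin N → ℝ)) = (g : Fin N → ℝ) := by
      rw [hg]
      with_unfolding_all exact hI
    rw [hv]
    refine (hx k).trans ?_
    simp only [hℓ] at hpi ⊢
    rw [← hpi]
  have hzero : (inner ℝ g v : ℝ) = 0 := by
    rw [show v = WithLp.toLp 2 (v : Fin N → ℝ) from rfl, hvg, WithLp.toLp_smul, real_inner_smul_right]
    have : (inner ℝ g (WithLp.toLp 2 (L *ᵥ g : Fin N → ℝ)) : ℝ)
        = (g : Fin N → ℝ) ⬝ᵥ (L *ᵥ (g : Fin N → ℝ)) := by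
      simp [PiLp.inner_apply, dotProduct, RCLike.inner_apply, mul_comm]
    rw [this, skew_dot_zero L hL]
    ring
  have := key.trans (hswap.trans hzero)
  linarith
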